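/- If A ∈ R_p satisfies p ∤ det(A), then ψ(A) is invertible in End(H_p), with inverse ψ(s·adj(A)) where s is an integer inverse of det(A) modulo p^{e_n}. -/

import Mathlib

/-- If `A ∈ R_p` satisfies `p ∤ det A`, then the induced endomorphism
`ψ A` of `H_p` is invertible in `End(H_p)`, with inverse `ψ (s • adj A)`, where `s` is
an integer inverse of `det A` modulo `p ^ e_n` (here `e_n` is the largest exponent). -/
theorem stmt_13 (p n : ℕ) (hp : p.Prime) (e : Fin (n + 1) → ℕ)
    (he1 : ∀ i, 1 ≤ e i) (he : Monotone e)
    (A : Matrix (Fin (n + 1)) (Fin (n + 1)) ℤ)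
    (hA : ∀ i j, j ≤ i → ((p : ℤ) ^ (e i - e j)) ∣ A i j)
    (hdet : ¬ (p : ℤ) ∣ A.det)
    (s : ℤ) (hs : ((p : ℤ) ^ e (Fin.last n)) ∣ (s * A.det - 1))
    (f g : AddMonoid.End (∀ i : Fin (n + 1), ZMod (p ^ e i)))
    (hf : ∀ h : Fin (n + 1) → ℤ,
      f (fun i => ((h i : ZMod (p ^ e i)))) = fun i => ((A.mulVec h i : ℤ) : ZMod (p ^ e i)))
    (hg : ∀ h : Fin (n + 1) → ℤ,
      g (fun i => ((h i : ZMod (p ^ e i)))) =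
        fun i => (((s • A.adjugate).mulVec h i : ℤ) : ZMod (p ^ e i))) :
    IsUnit f ∧ f * g = 1 ∧ g * f = 1 := by
  haveI : ∀ i : Fin (n + 1), NeZero (p ^ e i) := fun i =>
    ⟨pow_ne_zero _ hp.pos.ne'⟩
  -- every element is the image of an integer vector
  have surj : ∀ x : ∀ i : Fin (n + 1), ZMod (p ^ e i),
      ∃ h : Fin (n + 1) → ℤ, (fun i => ((h i : ZMod (p ^ e i)))) = x := by
    intro x
    refine ⟨fun i => ((x i).val : ℤ), funext fun i => ?_⟩
    push_cast
    exact ZMod.natCast_rightInverse (x i)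
  -- key congruence
  have key : ∀ (v : Fin (n + 1) → ℤ) (i : Fin (n + 1)),
      ((s * A.det * v i : ℤ) : ZMod (p ^ e i)) = (v i : ZMod (p ^ e i)) := by
    intro v i
    rw [ZMod.intCast_eq_intCast_iff]
    apply Int.ModEq.symm
    rw [Int.modEq_iff_dvd]
    have h1 : ((p : ℤ) ^ e i) ∣ (s * A.det - 1) := by
      refine dvd_trans (pow_dvd_pow _ (he (Fin.le_last i))) hs
    have := Dvd.dvd.mul_right h1 (v i)
    push_cast
    convert this using 1
    · rfl
    ring
  have hAg : A * (s • A.adjugate) = s • (A.det • (1 : Matrix (Fin (n + 1)) (Fin (n + 1)) ℤ)) := by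
    rw [Matrix.mul_smul, Matrix.mul_adjugate]
  have hgA : (s • A.adjugate) * A = s • (A.det • (1 : Matrix (Fin (n + 1)) (Fin (n + 1)) ℤ)) := by
    rw [Matrix.smul_mul, Matrix.adjugate_mul]
  have entry : ∀ (v : Fin (n + 1) → ℤ) (i : Fin (n + 1)),
      (s • (A.det • (1 : Matrix (Fin (n + 1)) (Fin (n + 1)) ℤ))).mulVec v i = s * A.det * v i := by
    intro v i
    rw [Matrix.smul_mulVec, Matrix.smul_mulVec, Matrix.one_mulVec]
    simp [mul_assoc]
  have hfg : f * g = 1 := by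
    refine AddMonoidHom.ext fun x => ?_
    obtain ⟨h, rfl⟩ := surj x
    show f (g _) = _
    rw [hg h, hf ((s • A.adjugate).mulVec h)]
    funext i
    rw [Matrix.mulVec_mulVec, hAg, entry, key]
    rfl
  have hgf : g * f = 1 := by
    refine AddMonoidHom.ext fun x => ?_
    obtain ⟨h, rfl⟩ := surj x
    show g (f _) = _
    rw [hf h, hg (A.mulVec h)]
    funext i
    rw [Matrix.mulVec_mulVec, hgA, entry, key]
    rfl
  exact ⟨⟨⟨f, g, hfg, hgf⟩, rfl⟩, hfg, hgf⟩
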